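/- Let n be a positive integer and let s ∈ ℂ satisfy Re(s) ≥ 0 and Re(p^{s·π(p)}) ≥ 1/2 for every prime p dividing n. Then |μ⋆(n, s)| ≤ 1. -/

import Mathlib

/-- The generalized Möbius function
`μ⋆(n, s) = (−1)^{ω(n)} · (∏_{p ∈ P(n)} (p^{s·π(p)} − 1)^{1/π(p)}) / n^s`
(all complex powers principal); for `n = 1` the empty product gives `μ⋆(1, s) = 1`. -/
noncomputable def muStar (n : ℕ) (s : ℂ) : ℂ :=
  (-1 : ℂ) ^ n.primeFactors.card *
    (∏ p ∈ n.primeFactors,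
      ((p : ℂ) ^ (s * (Nat.primeCounting p : ℂ)) - 1) ^ ((Nat.primeCounting p : ℂ))⁻¹) /
    (n : ℂ) ^ s

/-- if `n ≥ 1`, `Re s ≥ 0`, and `Re (p^{s·π(p)}) ≥ 1/2` for every prime `p`
dividing `n`, then `|μ⋆(n, s)| ≤ 1`. -/
theorem stmt_11 (n : ℕ) (hn : 0 < n) (s : ℂ) (hs : 0 ≤ s.re)
    (hp : ∀ p ∈ n.primeFactors,
      (1 : ℝ) / 2 ≤ ((p : ℂ) ^ (s * (Nat.primeCounting p : ℂ))).re) :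
    ‖muStar n s‖ ≤ 1 := by
  have hn' : (0 : ℝ) < n := by exact_mod_cast hn
  unfold muStar
  rw [show ((n : ℕ) : ℂ) = (((n : ℝ)) : ℂ) by norm_cast, norm_div, norm_mul, norm_pow, norm_neg, norm_one, one_pow, one_mul,
    Complex.norm_cpow_eq_rpow_re_of_pos hn', div_le_one (Real.rpow_pos_of_pos hn' _), norm_prod]
  have key : ∀ p ∈ n.primeFactors,
      ‖((p : ℂ) ^ (s * (Nat.primeCounting p : ℂ)) - 1)
        ^ ((Nat.primeCounting p : ℂ))⁻¹‖ ≤ (p : ℝ) ^ s.re := by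
    intro p hpmem
    have hpprime := Nat.prime_of_mem_primeFactors hpmem
    have hppos : (0 : ℝ) < p := by exact_mod_cast hpprime.pos
    set k := Nat.primeCounting p with hk
    have hkpos : 0 < k := by
      rw [hk, Nat.pos_iff_ne_zero, Ne, Nat.primeCounting_eq_zero_iff]
      exact not_le.mpr hpprime.one_lt
    have hkne : (k : ℝ) ≠ 0 := by exact_mod_cast hkpos.ne'
    set z := (p : ℂ) ^ (s * (k : ℂ)) with hz
    have hre : (1 : ℝ) / 2 ≤ z.re := hp p hpmem
    -- rewrite the complex exponent as a real cast
    have hcast : ((k : ℂ))⁻¹ = (((k : ℝ)⁻¹ : ℝ) : ℂ) := by push_cast; ring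
    rw [hcast, Complex.norm_cpow_real]
    -- |z - 1| ≤ |z|
    have habs : ‖z - 1‖ ≤ ‖z‖ := by
      have h1 : ‖z - 1‖ ^ 2 ≤ ‖z‖ ^ 2 := by
        rw [Complex.sq_norm, Complex.sq_norm, Complex.normSq_sub]
        simp only [map_one, mul_one, Complex.normSq_one]
        nlinarith [hre]
      exact (pow_le_pow_iff_left₀ (norm_nonneg _) (norm_nonneg _)
        (by norm_num)).mp h1
    have habsz : ‖z‖ = (p : ℝ) ^ (s.re * k) := by
      rw [hz, show ((p : ℕ) : ℂ) = (((p : ℝ)) : ℂ) by norm_cast,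
        Complex.norm_cpow_eq_rpow_re_of_pos hppos]
      congr 1
      simp [Complex.mul_re]
    calc ‖z - 1‖ ^ ((k : ℝ))⁻¹
        ≤ ‖z‖ ^ ((k : ℝ))⁻¹ :=
          Real.rpow_le_rpow (norm_nonneg _) habs (by positivity)
      _ = (p : ℝ) ^ s.re := by
          rw [habsz, ← Real.rpow_mul hppos.le, mul_assoc, mul_inv_cancel₀ hkne, mul_one]
  calc ∏ p ∈ n.primeFactors,
        ‖((p : ℂ) ^ (s * (Nat.primeCounting p : ℂ)) - 1)
          ^ ((Nat.primeCounting p : ℂ))⁻¹‖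
      ≤ ∏ p ∈ n.primeFactors, (p : ℝ) ^ s.re :=
        Finset.prod_le_prod (fun p _ => norm_nonneg _) key
    _ = ((∏ p ∈ n.primeFactors, (p : ℕ) : ℕ) : ℝ) ^ s.re := by
        push_cast
        rw [← Real.finset_prod_rpow _ _ (fun p hp => by positivity)]
    _ ≤ (n : ℝ) ^ s.re := by
        apply Real.rpow_le_rpow (by positivity) _ hs
        exact_mod_cast Nat.le_of_dvd hn (Nat.prod_primeFactors_dvd n)
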